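/- Let R₀ > 1 and evaluate P₁ and P₂ at the endemic equilibrium, i.e. with λ̄ = βB*/(κ + B*) and C = C* = βκS*/(κ + B*)². Then P₁(0) + P₂(0) = −(μda₁a₂a₃/(R₀ρ))·(1 − R₀)·(R₀κd(a₁a₂a₃ − δεω) + Ληa₂a₃); in particular, since R₀ > 1, P₁(0) + P₂(0) > 0, and P₁(0) + P₂(0) = 0 would hold only if R₀ = 1. -/

import Mathlib

set_option maxHeartbeats 1000000

/-- At the endemic equilibrium (with `λ̄ = βB*/(κ+B*)` and `C = C* = βκS*/(κ+B*)²`),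
`P₁(0) + P₂(0) = −(μda₁a₂a₃/(R₀ρ))(1−R₀)(R₀κd(a₁a₂a₃−δεω) + Ληa₂a₃)`; in particular,
since `R₀ > 1`, `P₁(0) + P₂(0) > 0`, and it could vanish only if `R₀ = 1`. -/
theorem siqrb_endemic_condition_iii
    (Λ μ β κ η d ω δ ε α₁ α₂ : ℝ)
    (hΛ : 0 < Λ) (hμ : 0 < μ) (hβ : 0 < β) (hκ : 0 < κ) (hη : 0 < η) (hd : 0 < d)
    (hω : 0 ≤ ω) (hδ : 0 ≤ δ) (hε : 0 ≤ ε) (hα₁ : 0 ≤ α₁) (hα₂ : 0 ≤ α₂)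
    (a₁ a₂ a₃ ρ D R₀ Sstar Bstar lam Cstar P₁0 P₂0 : ℝ)
    (ha₁ : a₁ = δ + α₁ + μ) (ha₂ : a₂ = ε + α₂ + μ) (ha₃ : a₃ = ω + μ)
    (hρ : ρ = Λ * η * a₂ * a₃ + κ * d * (a₁ * a₂ * a₃ - δ * ε * ω))
    (hD : D = a₁ * a₂ * a₃ * μ + β * (a₁ * a₂ * a₃ - δ * ε * ω))
    (hR₀ : R₀ = β * Λ * η / (μ * κ * d * a₁))
    (hR₀gt : 1 < R₀)
    (hS : Sstar = a₁ * ρ / (η * D))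
    (hB : Bstar = β * Λ * η * a₂ * a₃ * (R₀ - 1) / (R₀ * D * d))
    (hlam : lam = β * Bstar / (κ + Bstar))
    (hCstar : Cstar = β * κ * Sstar / (κ + Bstar) ^ 2)
    (hP₁0 : P₁0 = a₁ * a₂ * a₃ * d * (lam + μ))
    (hP₂0 : P₂0 = -(η * Cstar * a₂ * a₃ * μ) - δ * ε * ω * d * lam) :
    P₁0 + P₂0 = -(μ * d * a₁ * a₂ * a₃ / (R₀ * ρ)) * (1 - R₀) *
        (R₀ * κ * d * (a₁ * a₂ * a₃ - δ * ε * ω) + Λ * η * a₂ * a₃) ∧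
      0 < P₁0 + P₂0 ∧ (P₁0 + P₂0 = 0 → R₀ = 1) := by
  have ha1 : 0 < a₁ := by rw [ha₁]; linarith
  have ha2 : 0 < a₂ := by rw [ha₂]; linarith
  have ha3 : 0 < a₃ := by rw [ha₃]; linarith
  have hX : 0 < a₁ * a₂ * a₃ - δ * ε * ω := by
    have h1 : δ * ε * ω ≤ a₁ * ε * ω := by
      have : δ ≤ a₁ := by rw [ha₁]; linarith
      nlinarith [mul_nonneg hε hω]
    have h2 : a₁ * ε * ω ≤ a₁ * a₂ * ω := by
      have : ε ≤ a₂ := by rw [ha₂]; linarith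
      nlinarith [ha1.le, mul_nonneg ha1.le hω]
    have h3 : a₁ * a₂ * ω < a₁ * a₂ * a₃ := by
      have : ω < a₃ := by rw [ha₃]; linarith
      nlinarith [mul_pos ha1 ha2]
    linarith
  have hρpos : 0 < ρ := by
    rw [hρ]
    nlinarith [mul_pos (mul_pos hκ hd) hX, mul_pos (mul_pos (mul_pos hΛ hη) ha2) ha3]
  have hDpos : 0 < D := by
    rw [hD]
    nlinarith [mul_pos hβ hX, mul_pos (mul_pos (mul_pos ha1 ha2) ha3) hμ]
  have hR₀pos : 0 < R₀ := by linarith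
  have hR₀ne : R₀ ≠ 0 := ne_of_gt hR₀pos
  have hρne : ρ ≠ 0 := ne_of_gt hρpos
  have hDne : D ≠ 0 := ne_of_gt hDpos
  have hβΛη : β * Λ * η = R₀ * (μ * κ * d * a₁) := by
    rw [hR₀]; field_simp
  have hBval : Bstar = μ * κ * a₁ * a₂ * a₃ * (R₀ - 1) / D := by
    rw [hB, hβΛη]; field_simp
  have hBpos : 0 < Bstar := by
    rw [hBval]
    exact div_pos (mul_pos (by positivity) (by linarith)) hDpos
  have hκBval : κ + Bstar = β * ρ / (d * D) := by
    rw [hBval, hρ, hD, eq_div_iff (by positivity : d * (a₁ * a₂ * a₃ * μ + β * (a₁ * a₂ * a₃ - δ * ε * ω)) ≠ 0)]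
    field_simp
    linear_combination (-(a₂ * a₃)) * hβΛη
  have hlamval : lam = μ * κ * d * a₁ * a₂ * a₃ * (R₀ - 1) / ρ := by
    rw [hlam, hκBval, hBval]; field_simp
  have hηC : η * Cstar = κ * a₁ * d ^ 2 * D / (β * ρ) := by
    rw [hCstar, hS, hκBval]; field_simp
  have key : P₁0 + P₂0 = -(μ * d * a₁ * a₂ * a₃ / (R₀ * ρ)) * (1 - R₀) *
      (R₀ * κ * d * (a₁ * a₂ * a₃ - δ * ε * ω) + Λ * η * a₂ * a₃) := by
    rw [hP₁0, hP₂0, hlamval, hηC]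
    rw [hR₀, hD, hρ]
    rw [hρ] at hρne
    have h1 : (μ : ℝ) ≠ 0 := hμ.ne'
    field_simp
    ring
  refine ⟨key, ?_, ?_⟩
  · rw [key]
    have hgt : 0 < R₀ - 1 := by linarith
    have h1 : 0 < μ * d * a₁ * a₂ * a₃ / (R₀ * ρ) := by positivity
    have h2 : 0 < R₀ * κ * d * (a₁ * a₂ * a₃ - δ * ε * ω) + Λ * η * a₂ * a₃ := by positivity
    nlinarith [mul_pos (mul_pos h1 hgt) h2]
  · intro h
    rw [key] at h
    exfalso
    have hgt : 0 < R₀ - 1 := by linarith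
    have h1 : 0 < μ * d * a₁ * a₂ * a₃ / (R₀ * ρ) := by positivity
    have h2 : 0 < R₀ * κ * d * (a₁ * a₂ * a₃ - δ * ε * ω) + Λ * η * a₂ * a₃ := by positivity
    nlinarith [mul_pos (mul_pos h1 hgt) h2]
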